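/- arXiv:2605.05582 — 4 statements merged into one kernel-verified Lean document; each statement's English description precedes it below -/
import Mathlib

section
/- Let n ≥ 1 and let Φ be a holomorphic map from the open upper half-plane {z ∈ ℂ : Im z > 0} to the n×n complex matrices such that for every z in the upper half-plane the matrix Φ(z) is symmetric (Φ(z)ᵀ = Φ(z)) and the matrix B(z) := (Φ(z) − Φ(z)*)/(2i) is positive definite. Then for every z = σ + iτ with τ > 0 one has |det(Φ'(z))| ≤ det(B(z)) / τⁿ, i.e. ‖det(Φ'(z))‖ · (Im z)ⁿ ≤ Re(det(B(z))). -/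
open Matrix
open scoped ComplexOrder

lemma re_dot_self_nonneg {m : ℕ} (w : Fin m → ℂ) : 0 ≤ (star w ⬝ᵥ w).re := by
  have : star w ⬝ᵥ w = ∑ i, (Complex.normSq (w i) : ℂ) := by
    simp [dotProduct, Complex.normSq_eq_conj_mul_self]
  rw [this, Complex.re_sum]
  apply Finset.sum_nonneg
  intro i _
  simp [Complex.normSq_nonneg]

lemma dot_self_mulVec {m : ℕ} (A : Matrix (Fin m) (Fin m) ℂ) (y : Fin m → ℂ) :
    star (A *ᵥ y) ⬝ᵥ (A *ᵥ y) = star y ⬝ᵥ ((Aᴴ * A) *ᵥ y) := by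
  simp only [star_mulVec, dotProduct_mulVec, vecMul_vecMul]

lemma contraction_det_le_one {m : ℕ} (C : Matrix (Fin m) (Fin m) ℂ)
    (h : ∀ x : Fin m → ℂ, (star (C *ᵥ x) ⬝ᵥ (C *ᵥ x)).re ≤ (star x ⬝ᵥ x).re) :
    ‖C.det‖ ≤ 1 := by
  have hH : (Cᴴ * C).PosSemidef := posSemidef_conjTranspose_mul_self C
  have hHerm := hH.1
  have hev : ∀ i, hHerm.eigenvalues i ≤ 1 := by
    intro i
    have hvnorm : ‖hHerm.eigenvectorBasis i‖ = 1 := hHerm.eigenvectorBasis.orthonormal.1 i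
    set v : EuclideanSpace ℂ (Fin m) := hHerm.eigenvectorBasis i with hv
    have h1 : (star (v : Fin m → ℂ) ⬝ᵥ (v : Fin m → ℂ)).re = 1 := by
      have : star (v : Fin m → ℂ) ⬝ᵥ (v : Fin m → ℂ) = (inner ℂ v v : ℂ) := by
        rw [EuclideanSpace.inner_eq_star_dotProduct, dotProduct_comm]
      rw [this, inner_self_eq_norm_sq_to_K, hvnorm]
      norm_num
    have h2 := hHerm.eigenvalues_eq i
    rw [← dot_self_mulVec] at h2
    calc hHerm.eigenvalues i = _ := h2
      _ ≤ (star (v : Fin m → ℂ) ⬝ᵥ (v : Fin m → ℂ)).re := h _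
      _ = 1 := h1
  have hdet : (Cᴴ * C).det = ((∏ i, hHerm.eigenvalues i : ℝ) : ℂ) := by
    rw [hHerm.det_eq_prod_eigenvalues]; push_cast; rfl
  have hnormsq : (Cᴴ * C).det = ((‖C.det‖ ^ 2 : ℝ) : ℂ) := by
    rw [det_mul, det_conjTranspose]
    rw [Complex.star_def, ← Complex.normSq_eq_conj_mul_self, Complex.normSq_eq_norm_sq]
  have hprod : ‖C.det‖ ^ 2 = ∏ i, hHerm.eigenvalues i := by
    have := hnormsq.symm.trans hdet
    exact_mod_cast this
  have hle : ‖C.det‖ ^ 2 ≤ 1 := by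
    rw [hprod]
    exact Finset.prod_le_one (fun i _ => hH.eigenvalues_nonneg i) (fun i _ => hev i)
  nlinarith [norm_nonneg C.det]

lemma posdef_congruence {m : ℕ} {A B : Matrix (Fin m) (Fin m) ℂ}
    (hA : A.PosDef) (hB : IsUnit B.det) : (Bᴴ * A * B).PosDef := by
  refine PosDef.of_dotProduct_mulVec_pos ?_ fun x hx => ?_
  · have := hA.isHermitian
    unfold Matrix.IsHermitian
    simp only [conjTranspose_mul, conjTranspose_conjTranspose, this.eq]
    rw [Matrix.mul_assoc]
  · have hBx : B *ᵥ x ≠ 0 := by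
      intro h0
      have h1 := congrArg (fun v => B⁻¹ *ᵥ v) h0
      simp only [mulVec_mulVec, nonsing_inv_mul B hB, one_mulVec, mulVec_zero] at h1
      exact hx h1
    have key : star x ⬝ᵥ ((Bᴴ * A * B) *ᵥ x) = star (B *ᵥ x) ⬝ᵥ (A *ᵥ (B *ᵥ x)) := by
      simp only [star_mulVec, dotProduct_mulVec, vecMul_vecMul, Matrix.mul_assoc]
    rw [key]
    rw [dotProduct_mulVec]
    have := hA.dotProduct_mulVec_pos hBx
    rwa [dotProduct_mulVec] at this

lemma shift_det_ineq {m : ℕ} (V : Matrix (Fin m) (Fin m) ℂ)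
    (hV : (V + Vᴴ).PosDef) :
    (V + 1).det ≠ 0 ∧ ‖(V - 1).det‖ ≤ ‖(V + 1).det‖ := by
  have hid : (V + 1)ᴴ * (V + 1) = (V - 1)ᴴ * (V - 1) + ((V + Vᴴ) + (V + Vᴴ)) := by
    simp only [conjTranspose_add, conjTranspose_sub, conjTranspose_one]
    noncomm_ring
  have hpt : ∀ y : Fin m → ℂ,
      (star ((V + 1) *ᵥ y) ⬝ᵥ ((V + 1) *ᵥ y)).re
        = (star ((V - 1) *ᵥ y) ⬝ᵥ ((V - 1) *ᵥ y)).re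
          + ((star y ⬝ᵥ ((V + Vᴴ) *ᵥ y)).re + (star y ⬝ᵥ ((V + Vᴴ) *ᵥ y)).re) := by
    intro y
    rw [dot_self_mulVec, dot_self_mulVec, hid]
    simp only [add_mulVec, dotProduct_add, Complex.add_re]
  have hdet1 : (V + 1).det ≠ 0 := by
    intro h0
    obtain ⟨y, hy, hy0⟩ := (Matrix.exists_mulVec_eq_zero_iff).2 h0
    have := hpt y
    rw [hy0] at this
    simp only [dotProduct_zero, star_zero, zero_dotProduct, Complex.zero_re] at this
    have h1 := re_dot_self_nonneg ((V - 1) *ᵥ y)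
    have h2 : 0 < (star y ⬝ᵥ ((V + Vᴴ) *ᵥ y)).re := by
      simpa using hV.re_dotProduct_pos hy
    linarith
  have hcon : ∀ x : Fin m → ℂ,
      (star (((V - 1) * (V + 1)⁻¹) *ᵥ x) ⬝ᵥ (((V - 1) * (V + 1)⁻¹) *ᵥ x)).re
        ≤ (star x ⬝ᵥ x).re := by
    intro x
    set y := (V + 1)⁻¹ *ᵥ x with hy
    have hxy : (V + 1) *ᵥ y = x := by
      rw [hy, mulVec_mulVec, mul_nonsing_inv _ hdet1.isUnit, one_mulVec]
    have hCx : ((V - 1) * (V + 1)⁻¹) *ᵥ x = (V - 1) *ᵥ y := by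
      rw [hy, mulVec_mulVec]
    rw [hCx, ← hxy]
    have hpty := hpt y
    have h2 : 0 ≤ (star y ⬝ᵥ ((V + Vᴴ) *ᵥ y)).re := by
      simpa using hV.posSemidef.re_dotProduct_nonneg y
    linarith
  refine ⟨hdet1, ?_⟩
  have hC := contraction_det_le_one _ hcon
  have hfact : (V - 1) = ((V - 1) * (V + 1)⁻¹) * (V + 1) := by
    rw [Matrix.mul_assoc, nonsing_inv_mul _ hdet1.isUnit, Matrix.mul_one]
  calc ‖(V - 1).det‖ = ‖((V - 1) * (V + 1)⁻¹).det‖ * ‖(V + 1).det‖ := by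
        rw [hfact]; rw [det_mul, norm_mul]; rw [← hfact]
      _ ≤ 1 * ‖(V + 1).det‖ := by
        apply mul_le_mul_of_nonneg_right hC (norm_nonneg _)
      _ = ‖(V + 1).det‖ := one_mul _

open scoped MatrixOrder in
lemma weighted_det_ineq {m : ℕ} (W Q : Matrix (Fin m) (Fin m) ℂ)
    (hW : (W + Wᴴ).PosDef) (hQ : Q.PosDef) :
    (W + Q).det ≠ 0 ∧ ‖(W - Q).det‖ ≤ ‖(W + Q).det‖ := by
  set R := CFC.sqrt Q with hR
  have hRmul : R * R = Q := CFC.sqrt_mul_sqrt_self Q hQ.posSemidef.nonneg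
  have hRherm : R.IsHermitian := (CFC.sqrt_nonneg Q).posSemidef.1
  have hRdet : R.det ≠ 0 := by
    intro h0
    have : Q.det = 0 := by rw [← hRmul, det_mul, h0, mul_zero]
    exact hQ.det_pos.ne' this
  have hRunit : IsUnit R.det := hRdet.isUnit
  have hRinvdet : IsUnit (R⁻¹).det := by
    rw [det_nonsing_inv, Ring.inverse_eq_inv']
    exact hRunit.inv
  set V := R⁻¹ * W * R⁻¹ with hV
  have hRinvherm : (R⁻¹)ᴴ = R⁻¹ := by
    rw [conjTranspose_nonsing_inv, hRherm.eq]
  have hVsum : V + Vᴴ = (R⁻¹)ᴴ * (W + Wᴴ) * R⁻¹ := by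
    rw [hV]
    simp only [conjTranspose_mul, hRinvherm, conjTranspose_conjTranspose]
    rw [Matrix.mul_add, Matrix.add_mul]
    noncomm_ring
  have hVpos : (V + Vᴴ).PosDef := by
    rw [hVsum]
    exact posdef_congruence hW hRinvdet
  have hplus : W + Q = R * (V + 1) * R := by
    have h1 : R * (R⁻¹ * W * R⁻¹) * R = (R * R⁻¹) * W * (R⁻¹ * R) := by noncomm_ring
    rw [Matrix.mul_add, Matrix.add_mul, Matrix.mul_one, h1,
      mul_nonsing_inv _ hRunit, nonsing_inv_mul _ hRunit, Matrix.one_mul,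
      Matrix.mul_one, hRmul]
  have hminus : W - Q = R * (V - 1) * R := by
    have h1 : R * (R⁻¹ * W * R⁻¹) * R = (R * R⁻¹) * W * (R⁻¹ * R) := by noncomm_ring
    rw [Matrix.mul_sub, Matrix.sub_mul, Matrix.mul_one, h1,
      mul_nonsing_inv _ hRunit, nonsing_inv_mul _ hRunit, Matrix.one_mul,
      Matrix.mul_one, hRmul]
  obtain ⟨hne, hle⟩ := shift_det_ineq V hVpos
  constructor
  · rw [hplus, det_mul, det_mul]
    exact mul_ne_zero (mul_ne_zero hRdet hne) hRdet
  · rw [hplus, hminus, det_mul, det_mul, det_mul, det_mul, norm_mul, norm_mul,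
      norm_mul, norm_mul]
    have h0 : 0 ≤ ‖R.det‖ := norm_nonneg _
    have h1 : 0 ≤ ‖R.det‖ * ‖R.det‖ := mul_nonneg h0 h0
    calc ‖R.det‖ * ‖(V - 1).det‖ * ‖R.det‖ = ‖R.det‖ * ‖R.det‖ * ‖(V - 1).det‖ := by ring
      _ ≤ ‖R.det‖ * ‖R.det‖ * ‖(V + 1).det‖ := mul_le_mul_of_nonneg_left hle h1
      _ = ‖R.det‖ * ‖(V + 1).det‖ * ‖R.det‖ := by ring

lemma main_det_ineq {m : ℕ} (A B : Matrix (Fin m) (Fin m) ℂ)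
    (hA : ((2 * Complex.I)⁻¹ • (A - Aᴴ)).PosDef)
    (hB : ((2 * Complex.I)⁻¹ • (B - Bᴴ)).PosDef) :
    (A - Bᴴ).det ≠ 0 ∧ ‖(A - B).det‖ ≤ ‖(A - Bᴴ).det‖ := by
  have h2i : (2 * Complex.I)⁻¹ = -Complex.I / 2 := by
    rw [mul_inv, Complex.inv_I]; ring
  set W : Matrix (Fin m) (Fin m) ℂ := (Complex.I / 2) • (B + Bᴴ - A - A) with hWdef
  set Q : Matrix (Fin m) (Fin m) ℂ := (2 * Complex.I)⁻¹ • (B - Bᴴ) with hQdef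
  set P : Matrix (Fin m) (Fin m) ℂ := (2 * Complex.I)⁻¹ • (A - Aᴴ) with hPdef
  have h1 : A - B = Complex.I • (W - Q) := by
    ext i j
    simp only [hWdef, hQdef, h2i, Matrix.sub_apply, Matrix.add_apply, Matrix.smul_apply,
      Matrix.conjTranspose_apply, smul_eq_mul, Complex.star_def]
    linear_combination (A i j - B i j) * Complex.I_sq
  have h2 : A - Bᴴ = Complex.I • (W + Q) := by
    ext i j
    simp only [hWdef, hQdef, h2i, Matrix.sub_apply, Matrix.add_apply, Matrix.smul_apply,
      Matrix.conjTranspose_apply, smul_eq_mul, Complex.star_def]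
    linear_combination (A i j - (starRingEnd ℂ) (B j i)) * Complex.I_sq
  have h3 : W + Wᴴ = P + P := by
    ext i j
    simp only [hWdef, hPdef, h2i, Matrix.sub_apply, Matrix.add_apply, Matrix.smul_apply,
      Matrix.conjTranspose_apply, smul_eq_mul, Complex.star_def, _root_.map_mul,
      map_sub, _root_.map_add, map_div₀, Complex.conj_I, Complex.conj_conj, map_ofNat]
    ring
  have hW : (W + Wᴴ).PosDef := by rw [h3]; exact hA.add hA
  obtain ⟨hne, hle⟩ := weighted_det_ineq W Q hW hB
  have hcard : (Complex.I : ℂ) ^ Fintype.card (Fin m) ≠ 0 :=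
    pow_ne_zero _ Complex.I_ne_zero
  constructor
  · rw [h2, det_smul]
    exact mul_ne_zero hcard hne
  · rw [h1, h2, det_smul, det_smul]
    simp only [norm_mul, norm_pow, Complex.norm_I, one_pow, one_mul]
    exact hle

lemma diffOn_finset_prod {ι : Type*} {s : Set ℂ} (u : Finset ι) (f : ι → ℂ → ℂ)
    (h : ∀ i ∈ u, DifferentiableOn ℂ (f i) s) :
    DifferentiableOn ℂ (fun w => ∏ i ∈ u, f i w) s := by
  classical
  induction u using Finset.induction with
  | empty => simp only [Finset.prod_empty]; exact differentiableOn_const 1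
  | insert a t hni ih =>
    simp only [Finset.prod_insert hni]
    exact (h a (Finset.mem_insert_self a t)).mul
      (ih fun i hi => h i (Finset.mem_insert_of_mem hi))

lemma diffOn_det {m : ℕ} {M : ℂ → Matrix (Fin m) (Fin m) ℂ} {s : Set ℂ}
    (h : ∀ i j, DifferentiableOn ℂ (fun w => M w i j) s) :
    DifferentiableOn ℂ (fun w => (M w).det) s := by
  simp only [Matrix.det_apply']
  apply DifferentiableOn.fun_sum
  intro σ _
  exact (diffOn_finset_prod _ _ fun i _ => h (σ i) i).const_mul _

lemma mobius_im {z u : ℂ} (hz : 0 < z.im) (hu : ‖u‖ < 1) :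
    0 < ((z - (starRingEnd ℂ) z * u) / (1 - u)).im := by
  have h1u : (1 : ℂ) - u ≠ 0 := by
    intro h
    rw [sub_eq_zero] at h
    rw [← h] at hu
    simp at hu
  have hns : 0 < Complex.normSq (1 - u) := by
    rwa [Complex.normSq_pos]
  have husq : u.re ^ 2 + u.im ^ 2 < 1 := by
    have h1 : Complex.normSq u < 1 := by
      rw [← Complex.sq_norm]
      have : ‖u‖ < 1 := hu
      nlinarith [norm_nonneg u]
    rw [Complex.normSq_apply] at h1
    nlinarith
  rw [Complex.div_im, div_sub_div_same]
  apply div_pos ?_ hns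
  simp only [Complex.sub_re, Complex.sub_im, Complex.mul_re, Complex.mul_im,
    Complex.conj_re, Complex.conj_im, Complex.one_re, Complex.one_im]
  nlinarith [hz, husq]

/-- Matrix-valued Schwarz–Pick lemma (determinant form): if `Φ` is a holomorphic
symmetric matrix-valued Herglotz function on the upper half-plane, with
`B z = (Φ z - (Φ z)ᴴ) / (2i)` positive definite, then
`|det Φ'(z)| ≤ det (B z) / (Im z)^n`. -/
theorem matrix_herglotz_det_deriv_bound
    (n : ℕ) (hn : 1 ≤ n)
    (Φ Φ' : ℂ → Matrix (Fin n) (Fin n) ℂ)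
    (hderiv : ∀ z : ℂ, 0 < z.im → ∀ i j : Fin n,
      HasDerivAt (fun w => Φ w i j) (Φ' z i j) z)
    (hsym : ∀ z : ℂ, 0 < z.im → (Φ z)ᵀ = Φ z)
    (hpos : ∀ z : ℂ, 0 < z.im →
      ((2 * Complex.I)⁻¹ • (Φ z - (Φ z)ᴴ)).PosDef) :
    ∀ z : ℂ, 0 < z.im →
      ‖(Φ' z).det‖ * z.im ^ n ≤ (((2 * Complex.I)⁻¹ • (Φ z - (Φ z)ᴴ)).det).re := by
  intro z hz
  classical
  set U : Set ℂ := {w : ℂ | 0 < w.im} with hUdef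
  have hUopen : IsOpen U := isOpen_lt continuous_const Complex.continuous_im
  have hzU : z ∈ U := hz
  have hentry : ∀ i j : Fin n, DifferentiableOn ℂ (fun w => Φ w i j) U := fun i j w hw =>
    (hderiv w hw i j).differentiableAt.differentiableWithinAt
  set Ψ : ℂ → Matrix (Fin n) (Fin n) ℂ :=
      fun w => Matrix.of fun i j => dslope (fun u => Φ u i j) z w with hΨdef
  have hΨentry : ∀ i j : Fin n, DifferentiableOn ℂ (fun w => Ψ w i j) U := by
    intro i j w hw
    rcases eq_or_ne w z with rfl | hne
    · obtain ⟨p, hp⟩ := (hentry i j).analyticAt (hUopen.mem_nhds hw)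
      exact hp.has_fpower_series_dslope_fslope.analyticAt.differentiableAt.differentiableWithinAt
    · exact (differentiableWithinAt_dslope_of_ne hne).2 ((hentry i j) w hw)
  have hΨz : Ψ z = Φ' z := by
    ext i j
    simp only [hΨdef, Matrix.of_apply]
    rw [dslope_same]
    exact (hderiv z hz i j).deriv
  have hsmul : ∀ w : ℂ, (w - z) • Ψ w = Φ w - Φ z := by
    intro w; ext i j
    simp only [hΨdef, Matrix.smul_apply, Matrix.of_apply, Matrix.sub_apply, smul_eq_mul]
    exact sub_smul_dslope (fun u => Φ u i j) z w
  set F : ℂ → ℂ := fun w => (Φ w - (Φ z)ᴴ).det with hFdef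
  have hFdiff : DifferentiableOn ℂ F U :=
    diffOn_det (fun i j => (hentry i j).sub_const _)
  have hΨdet : DifferentiableOn ℂ (fun w => (Ψ w).det) U := diffOn_det hΨentry
  have hFne : ∀ w ∈ U, F w ≠ 0 := fun w hw =>
    (main_det_ineq (Φ w) (Φ z) (hpos w hw) (hpos z hz)).1
  have hGF : ∀ w ∈ U, ‖(Φ w - Φ z).det‖ ≤ ‖F w‖ := fun w hw =>
    (main_det_ineq (Φ w) (Φ z) (hpos w hw) (hpos z hz)).2
  set c : ℂ := z - (starRingEnd ℂ) z with hcdef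
  set φ : ℂ → ℂ := fun u => (z - (starRingEnd ℂ) z * u) / (1 - u) with hφdef
  have hu1 : ∀ u : ℂ, ‖u‖ < 1 → (1 : ℂ) - u ≠ 0 := by
    intro u hu h
    rw [sub_eq_zero] at h
    rw [← h] at hu
    simp at hu
  have hφmem : ∀ u ∈ Metric.ball (0:ℂ) 1, φ u ∈ U := by
    intro u hu
    exact mobius_im hz (by simpa using hu)
  have hφdiff : DifferentiableOn ℂ φ (Metric.ball (0:ℂ) 1) := by
    apply DifferentiableOn.div
    · exact (differentiableOn_const z).sub ((differentiableOn_const _).mul differentiableOn_id)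
    · exact (differentiableOn_const 1).sub differentiableOn_id
    · intro u hu; exact hu1 u (by simpa using hu)
  have hφ0 : φ 0 = z := by simp [hφdef]
  have hφsub : ∀ u : ℂ, ‖u‖ < 1 → φ u - z = u * (c / (1 - u)) := by
    intro u hu
    have h := hu1 u hu
    rw [hφdef, hcdef]
    field_simp
    ring
  set ρ : ℂ → ℂ := fun u => (c / (1 - u)) ^ n * (Ψ (φ u)).det / F (φ u) with hρdef
  have hρdiff : DifferentiableOn ℂ ρ (Metric.ball (0:ℂ) 1) := by
    apply DifferentiableOn.div
    · apply DifferentiableOn.mul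
      · apply DifferentiableOn.pow
        apply DifferentiableOn.div (differentiableOn_const c)
          ((differentiableOn_const 1).sub differentiableOn_id)
        intro u hu; exact hu1 u (by simpa using hu)
      · exact hΨdet.comp hφdiff hφmem
    · exact hFdiff.comp hφdiff hφmem
    · intro u hu; exact hFne _ (hφmem u hu)
  have hkey : ∀ u ∈ Metric.ball (0:ℂ) 1, ‖u‖ ^ n * ‖ρ u‖ ≤ 1 := by
    intro u hu
    have hun : ‖u‖ < 1 := by simpa using hu
    have hwU : φ u ∈ U := hφmem u hu
    have h1 : (Φ (φ u) - Φ z).det = (φ u - z) ^ n * (Ψ (φ u)).det := by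
      rw [← hsmul (φ u), Matrix.det_smul, Fintype.card_fin]
    have hcalc : u ^ n * ρ u = (Φ (φ u) - Φ z).det / F (φ u) := by
      rw [h1, hφsub u hun, hρdef, mul_pow]
      ring
    rw [← norm_pow, ← norm_mul, hcalc, norm_div]
    rw [div_le_one (norm_pos_iff.2 (hFne _ hwU))]
    exact hGF _ hwU
  have hball : ∀ r : ℝ, r ∈ Set.Ioo (0:ℝ) 1 → ‖ρ 0‖ ≤ 1 / r ^ n := by
    intro r hr
    have hsub : Metric.closedBall (0:ℂ) r ⊆ Metric.ball 0 1 :=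
      Metric.closedBall_subset_ball hr.2
    apply Complex.norm_le_of_forall_mem_frontier_norm_le (U := Metric.ball (0:ℂ) r)
      Metric.isBounded_ball
    · constructor
      · exact hρdiff.mono (Metric.ball_subset_ball hr.2.le)
      · rw [closure_ball (0:ℂ) hr.1.ne']
        exact hρdiff.continuousOn.mono hsub
    · intro w hw
      rw [frontier_ball (0:ℂ) hr.1.ne'] at hw
      have hwn : ‖w‖ = r := by simpa using hw
      have hwb : w ∈ Metric.ball (0:ℂ) 1 := by
        rw [mem_ball_zero_iff, hwn]; exact hr.2
      have hk := hkey w hwb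
      rw [hwn] at hk
      rw [le_div_iff₀ (pow_pos hr.1 n)]
      linarith [hk]
    · exact subset_closure (Metric.mem_ball_self hr.1)
  have hρ0 : ‖ρ 0‖ ≤ 1 := by
    have hc1 : ContinuousAt (fun r : ℝ => 1 / r ^ n) 1 := by
      apply ContinuousAt.div continuousAt_const (continuousAt_pow _ _)
      norm_num
    have htend : Filter.Tendsto (fun r : ℝ => 1 / r ^ n) (nhdsWithin 1 (Set.Iio 1)) (nhds 1) := by
      have := tendsto_nhdsWithin_of_tendsto_nhds (s := Set.Iio (1:ℝ)) hc1.tendsto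
      simpa using this
    apply ge_of_tendsto htend
    filter_upwards [Ioo_mem_nhdsLT_of_mem (by norm_num : (1:ℝ) ∈ Set.Ioc 0 1)] with r hr
    exact hball r hr
  -- final computation
  have hρ0val : ρ 0 = c ^ n * (Φ' z).det / F z := by
    rw [hρdef]
    simp [hφ0, hΨz]
  set d : ℂ := ((2 * Complex.I)⁻¹ • (Φ z - (Φ z)ᴴ)).det with hddef
  have hdpos : 0 < d := (hpos z hz).det_pos
  have hdre : 0 < d.re := (Complex.lt_def.1 hdpos).1
  have hdim : d.im = 0 := ((Complex.lt_def.1 hdpos).2).symm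
  have hFz : F z = (2 * Complex.I) ^ n * d := by
    have hFzval : F z = (Φ z - (Φ z)ᴴ).det := rfl
    rw [hFzval, hddef]
    have h2 : (Φ z - (Φ z)ᴴ) = (2 * Complex.I) • ((2 * Complex.I)⁻¹ • (Φ z - (Φ z)ᴴ)) := by
      rw [smul_smul, mul_inv_cancel₀ (by simp [Complex.I_ne_zero] : (2 * Complex.I : ℂ) ≠ 0),
        one_smul]
    conv_lhs => rw [h2]
    rw [det_smul, Fintype.card_fin]
  have hdnorm : ‖d‖ = d.re := by
    have : d = ((d.re : ℝ) : ℂ) := Complex.ext rfl (by simp [hdim])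
    rw [this]
    simp [abs_of_pos hdre]
  have hcnorm : ‖c‖ = 2 * z.im := by
    rw [hcdef, Complex.sub_conj]
    rw [norm_mul, Complex.norm_I, mul_one]
    simp [abs_of_pos hz]
  have hnorm : ‖ρ 0‖ = (2 * z.im) ^ n * ‖(Φ' z).det‖ / (2 ^ n * d.re) := by
    rw [hρ0val, norm_div, norm_mul, norm_pow, hcnorm, hFz, norm_mul, norm_pow,
      norm_mul, Complex.norm_I, mul_one, hdnorm]
    norm_num
  rw [hnorm] at hρ0
  have hden : (0:ℝ) < 2 ^ n * d.re := by positivity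
  rw [div_le_one hden] at hρ0
  rw [mul_pow] at hρ0
  have h2n : (0:ℝ) < 2 ^ n := by positivity
  calc ‖(Φ' z).det‖ * z.im ^ n ≤ d.re := by nlinarith [hρ0]
end

section
/- Let n ≥ 1 and let Φ be a holomorphic map from the open upper half-plane {z ∈ ℂ : Im z > 0} to the n×n complex matrices such that for every z in the upper half-plane the matrix Φ(z) is symmetric (Φ(z)ᵀ = Φ(z)) and the matrix B(z) := (Φ(z) − Φ(z)*)/(2i) is positive definite. Then for every z = σ + iτ with τ > 0 and every vector v ∈ ℂⁿ, one has |v* Φ'(z) v| ≤ (1/τ) · v* B(z) v, i.e. ‖⟪v, Φ'(z) v⟫‖ ≤ (Im z)⁻¹ · Re(⟪v, B(z) v⟫). -/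
open Metric Set Complex

/-- Scalar Schwarz–Pick for the upper half-plane. -/
lemma herglotz_deriv_bound {f f' : ℂ → ℂ}
    (hf : ∀ w : ℂ, 0 < w.im → HasDerivAt f (f' w) w)
    (him : ∀ w : ℂ, 0 < w.im → 0 < (f w).im)
    {z : ℂ} (hz : 0 < z.im) : ‖f' z‖ ≤ (z.im)⁻¹ * (f z).im := by
  set a := f z with ha
  have haim : 0 < a.im := him z hz
  -- Cayley transform sending the unit disk to the upper half-plane, 0 ↦ z
  set C : ℂ → ℂ := fun ζ => (z - (starRingEnd ℂ) z * ζ) / (1 - ζ) with hC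
  -- Möbius transform sending the upper half-plane to the unit disk, a ↦ 0
  set T : ℂ → ℂ := fun w => (w - a) / (w - (starRingEnd ℂ) a) with hT
  set g : ℂ → ℂ := fun ζ => T (f (C ζ)) with hg
  have hCmem : ∀ ζ ∈ ball (0:ℂ) 1, 0 < (C ζ).im := by
    intro ζ hζ
    simp only [mem_ball, dist_zero_right] at hζ
    have habs1 : ‖ζ‖ < 1 := by exact hζ
    have hns : Complex.normSq ζ < 1 := by
      nlinarith [Complex.sq_norm ζ, norm_nonneg ζ]
    have hζ1 : (1 : ℂ) - ζ ≠ 0 := by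
      intro h
      have : ζ = 1 := by linear_combination -h
      rw [this] at hns; simp [Complex.normSq] at hns
    have hq : 0 < Complex.normSq (1 - ζ) := Complex.normSq_pos.mpr hζ1
    have : (C ζ).im = z.im * (1 - Complex.normSq ζ) / Complex.normSq (1 - ζ) := by
      rw [hC]
      simp only [Complex.div_im, Complex.sub_re, Complex.sub_im, Complex.mul_re,
        Complex.mul_im, Complex.one_re, Complex.one_im, Complex.normSq_apply,
        Complex.conj_re, Complex.conj_im]
      field_simp [Complex.normSq_apply] at hq ⊢
      ring
    rw [this]
    exact div_pos (mul_pos hz (by linarith)) hq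
  have hTmem : ∀ w : ℂ, 0 < w.im → T w ∈ ball (0:ℂ) 1 := by
    intro w hw
    have hden : 0 < (w - (starRingEnd ℂ) a).im := by
      simp only [Complex.sub_im, Complex.conj_im]
      linarith
    have hdne : w - (starRingEnd ℂ) a ≠ 0 := fun h => by rw [h] at hden; simp at hden
    have hlt : Complex.normSq (w - a) < Complex.normSq (w - (starRingEnd ℂ) a) := by
      simp only [Complex.normSq_apply, Complex.sub_re, Complex.sub_im, Complex.conj_re,
        Complex.conj_im]
      nlinarith [mul_pos hw haim]
    have habs : ‖w - a‖ < ‖w - (starRingEnd ℂ) a‖ := by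
      rw [Complex.norm_def, Complex.norm_def]
      exact Real.sqrt_lt_sqrt (Complex.normSq_nonneg _) hlt
    simp only [mem_ball, dist_zero_right, hT]
    rw [norm_div]
    rw [div_lt_one (norm_pos_iff.mpr hdne)]
    exact habs
  have h2a : a - (starRingEnd ℂ) a ≠ 0 := by
    intro h
    have : (a - (starRingEnd ℂ) a).im = 0 := by rw [h]; simp
    simp only [Complex.sub_im, Complex.conj_im] at this
    linarith
  have hC0 : C 0 = z := by simp [hC]
  -- differentiability of g on the unit ball
  have hgdiff : DifferentiableOn ℂ g (ball (0:ℂ) 1) := by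
    intro ζ hζ
    have hζ1 : (1 : ℂ) - ζ ≠ 0 := by
      intro h
      have hζ' : ζ = 1 := by linear_combination -h
      rw [hζ'] at hζ; simp at hζ
    have hCdiff : DifferentiableAt ℂ C ζ := by
      apply DifferentiableAt.div
      · exact (differentiableAt_const _).sub ((differentiableAt_id).const_mul _)
      · exact (differentiableAt_const _).sub differentiableAt_id
      · exact hζ1
    have hfC : 0 < (f (C ζ)).im := him _ (hCmem ζ hζ)
    have hdne : f (C ζ) - (starRingEnd ℂ) a ≠ 0 := by
      intro h
      have : (f (C ζ) - (starRingEnd ℂ) a).im = 0 := by rw [h]; simp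
      simp only [Complex.sub_im, Complex.conj_im] at this
      linarith
    have hTdiff : DifferentiableAt ℂ T (f (C ζ)) := by
      apply DifferentiableAt.div
      · exact differentiableAt_id.sub (differentiableAt_const _)
      · exact differentiableAt_id.sub (differentiableAt_const _)
      · exact hdne
    have hfdiff : DifferentiableAt ℂ f (C ζ) := (hf _ (hCmem ζ hζ)).differentiableAt
    exact (DifferentiableAt.comp ζ hTdiff (hfdiff.comp ζ hCdiff)).differentiableWithinAt
  have hmaps : MapsTo g (ball (0:ℂ) 1) (ball (0:ℂ) 1) := by
    intro ζ hζ
    exact hTmem _ (him _ (hCmem ζ hζ))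
  have hg0 : g 0 = 0 := by
    simp only [hg, hC0, ← ha, hT]
    simp
  -- derivative of g at 0
  have hCd : HasDerivAt C (z - (starRingEnd ℂ) z) 0 := by
    have hu : HasDerivAt (fun ζ : ℂ => z - (starRingEnd ℂ) z * ζ) (-(starRingEnd ℂ) z) 0 := by
      simpa using (hasDerivAt_const (0:ℂ) z).fun_sub ((hasDerivAt_id' (x := (0:ℂ))).const_mul ((starRingEnd ℂ) z))
    have hv : HasDerivAt (fun ζ : ℂ => 1 - ζ) (-1 : ℂ) 0 := by
      simpa using (hasDerivAt_const (0:ℂ) (1:ℂ)).fun_sub (hasDerivAt_id' (x := (0:ℂ)))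
    have := hu.fun_div hv (by norm_num : (1:ℂ) - 0 ≠ 0)
    refine this.congr_deriv ?_
    field_simp
    ring
  have hTd : HasDerivAt T ((a - (starRingEnd ℂ) a)⁻¹) a := by
    have hu : HasDerivAt (fun w : ℂ => w - a) (1 : ℂ) a := by
      simpa using (hasDerivAt_id' (x := a)).fun_sub (hasDerivAt_const a a)
    have hv : HasDerivAt (fun w : ℂ => w - (starRingEnd ℂ) a) (1 : ℂ) a := by
      simpa using (hasDerivAt_id' (x := a)).fun_sub (hasDerivAt_const a ((starRingEnd ℂ) a))
    have := hu.fun_div hv h2a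
    refine this.congr_deriv ?_
    field_simp
    ring
  have hfd : HasDerivAt f (f' z) (C 0) := by rw [hC0]; exact hf z hz
  have hgd : HasDerivAt g ((a - (starRingEnd ℂ) a)⁻¹ * (f' z * (z - (starRingEnd ℂ) z))) 0 := by
    have h1 : HasDerivAt (f ∘ C) (f' z * (z - (starRingEnd ℂ) z)) 0 := hfd.comp 0 hCd
    have h2 : HasDerivAt T ((a - (starRingEnd ℂ) a)⁻¹) ((f ∘ C) 0) := by
      simpa [Function.comp, hC0, ← ha] using hTd
    exact h2.comp 0 h1
  -- Schwarz lemma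
  have hS : ‖deriv g 0‖ ≤ 1 / 1 := by
    apply Complex.norm_deriv_le_div_of_mapsTo_ball hgdiff _ one_pos
    rw [hg0]; exact hmaps.mono_right ball_subset_closedBall
  rw [hgd.deriv] at hS
  have hza : z - (starRingEnd ℂ) z = (2 * z.im : ℝ) * Complex.I := by
    simpa using Complex.sub_conj z
  have haa : a - (starRingEnd ℂ) a = (2 * a.im : ℝ) * Complex.I := by
    simpa using Complex.sub_conj a
  rw [norm_mul, norm_mul, norm_inv, haa, hza] at hS
  simp only [norm_mul, Complex.norm_real, Complex.norm_I, Real.norm_eq_abs, mul_one] at hS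
  rw [abs_two, abs_of_pos haim, abs_of_pos hz] at hS
  have h2a' : (0:ℝ) < 2 * a.im := by linarith
  have h2z' : (0:ℝ) < 2 * z.im := by linarith
  rw [inv_mul_le_iff₀ h2a'] at hS
  have : ‖f' z‖ ≤ (z.im)⁻¹ * a.im := by
    rw [inv_mul_eq_div, le_div_iff₀ hz]
    nlinarith [hS]
  simpa [← ha] using this


open Matrix
open scoped ComplexOrder

/-- Matrix-valued Schwarz–Pick lemma (quadratic-form version): if `Φ` is a
holomorphic symmetric matrix-valued Herglotz function on the upper half-plane,
with `B z = (Φ z - (Φ z)ᴴ) / (2i)` positive definite, then for every `z` with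
`Im z > 0` and every vector `v`, `|v* Φ'(z) v| ≤ (Im z)⁻¹ · (v* B(z) v)`. -/
theorem matrix_herglotz_deriv_quadratic_bound
    (n : ℕ) (hn : 1 ≤ n)
    (Φ Φ' : ℂ → Matrix (Fin n) (Fin n) ℂ)
    (hderiv : ∀ z : ℂ, 0 < z.im → ∀ i j : Fin n,
      HasDerivAt (fun w => Φ w i j) (Φ' z i j) z)
    (hsym : ∀ z : ℂ, 0 < z.im → (Φ z)ᵀ = Φ z)
    (hpos : ∀ z : ℂ, 0 < z.im →
      ((2 * Complex.I)⁻¹ • (Φ z - (Φ z)ᴴ)).PosDef) :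
    ∀ z : ℂ, 0 < z.im → ∀ v : Fin n → ℂ,
      ‖star v ⬝ᵥ (Φ' z).mulVec v‖ ≤
        (z.im)⁻¹ * (star v ⬝ᵥ (((2 * Complex.I)⁻¹ • (Φ z - (Φ z)ᴴ)).mulVec v)).re := by
  intro z hz v
  by_cases hv : v = 0
  · simp [hv]
  -- the scalar quadratic form
  set f : ℂ → ℂ := fun w => star v ⬝ᵥ (Φ w).mulVec v with hf
  set F : ℂ → ℂ := fun w => star v ⬝ᵥ (Φ' w).mulVec v with hF
  have hfd : ∀ w : ℂ, 0 < w.im → HasDerivAt f (F w) w := by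
    intro w hw
    have : HasDerivAt (fun u => ∑ i, star (v i) * ∑ j, Φ u i j * v j)
        (∑ i, star (v i) * ∑ j, Φ' w i j * v j) w := by
      apply HasDerivAt.fun_sum
      intro i _
      refine HasDerivAt.const_mul _ ?_
      apply HasDerivAt.fun_sum
      intro j _
      exact (hderiv w hw i j).mul_const (v j)
    simpa [hf, hF, dotProduct, Matrix.mulVec] using this
  -- the B-quadratic form is the imaginary part of f
  have hIm : ∀ w : ℂ, 0 < w.im →
      star v ⬝ᵥ (((2 * Complex.I)⁻¹ • (Φ w - (Φ w)ᴴ)).mulVec v) = ((f w).im : ℂ) := by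
    intro w hw
    have hconj : star v ⬝ᵥ ((Φ w)ᴴ.mulVec v) = (starRingEnd ℂ) (f w) := by
      simp only [hf, dotProduct, Matrix.mulVec, Matrix.conjTranspose_apply, map_sum,
        Finset.mul_sum, _root_.map_mul, RingHomCompTriple.comp_apply, Pi.star_apply,
        RCLike.star_def, RingHom.id_apply, Complex.conj_conj]
      rw [Finset.sum_comm]
      apply Finset.sum_congr rfl; intro i _
      apply Finset.sum_congr rfl; intro j _
      ring
    have hsplit : star v ⬝ᵥ (((2 * Complex.I)⁻¹ • (Φ w - (Φ w)ᴴ)).mulVec v)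
        = (2 * Complex.I)⁻¹ * (f w - (starRingEnd ℂ) (f w)) := by
      rw [Matrix.smul_mulVec, dotProduct_smul, Matrix.sub_mulVec, dotProduct_sub, hconj]
      simp [smul_eq_mul, hf]
    rw [hsplit, Complex.sub_conj]
    have h2I : (2 : ℂ) * Complex.I ≠ 0 := by simp [Complex.I_ne_zero]
    field_simp
    push_cast
    ring
  -- positivity of the imaginary part
  have him : ∀ w : ℂ, 0 < w.im → 0 < (f w).im := by
    intro w hw
    have hp := (hpos w hw).dotProduct_mulVec_pos hv
    rw [hIm w hw] at hp
    exact_mod_cast hp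
  have := herglotz_deriv_bound hfd him hz
  rw [hIm z hz]
  simpa [hF, hf] using this
end

section
/- Let n ≥ 1, let B be an n×n Hermitian positive definite complex matrix, let M be an arbitrary n×n complex matrix, and let c ≥ 0 be a real number. If |v* M v| ≤ c · (v* B v) for every vector v ∈ ℂⁿ (where v* B v is a nonnegative real number since B is positive definite), then |det(M)| ≤ cⁿ · det(B), where det(B) is a positive real number. -/
open Matrix
open scoped ComplexOrder
open Polynomial

/-- If `B` is Hermitian positive definite and `|v* M v| ≤ c · (v* B v)` for all
vectors `v`, then `|det M| ≤ cⁿ · det B`. -/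
theorem det_bound_of_quadratic_form_bound
    (n : ℕ) (hn : 1 ≤ n)
    (B M : Matrix (Fin n) (Fin n) ℂ) (hB : B.PosDef)
    (c : ℝ) (hc : 0 ≤ c)
    (hbound : ∀ v : Fin n → ℂ,
      ‖star v ⬝ᵥ M.mulVec v‖ ≤ c * (star v ⬝ᵥ B.mulVec v).re) :
    ‖M.det‖ ≤ c ^ n * B.det.re := by
  classical
  have : Nonempty (Fin n) := ⟨⟨0, hn⟩⟩
  have hSex : ∃ S : Matrix (Fin n) (Fin n) ℂ, S.IsHermitian ∧ S * S = B := by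
    open scoped MatrixOrder in
    exact ⟨CFC.sqrt B, (CFC.sqrt_nonneg B).posSemidef.1,
      CFC.sqrt_mul_sqrt_self B hB.posSemidef.nonneg⟩
  obtain ⟨S, hSherm, hSS⟩ := hSex
  have hdetB : 0 < B.det := hB.det_pos
  have hdetBre : 0 < B.det.re := by
    rw [Complex.lt_def] at hdetB; simpa using hdetB.1
  have hdetBim : B.det.im = 0 := by
    rw [Complex.lt_def] at hdetB; simpa using hdetB.2.symm
  have hdetS : S.det ≠ 0 := by
    intro h
    have : B.det = 0 := by rw [← hSS, det_mul, h, mul_zero]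
    exact hdetB.ne' this
  have hSunit : IsUnit S.det := hdetS.isUnit
  set T := S⁻¹ with hTdef
  have hTS : T * S = 1 := nonsing_inv_mul S hSunit
  have hST : S * T = 1 := mul_nonsing_inv S hSunit
  have hTherm : T.IsHermitian := hSherm.inv
  set N := T * M * T with hNdef
  -- quadratic form transfer
  have hdot : ∀ w : Fin n → ℂ,
      star w ⬝ᵥ N.mulVec w = star (T.mulVec w) ⬝ᵥ M.mulVec (T.mulVec w) := by
    intro w
    rw [hNdef]
    simp only [star_mulVec, hTherm.eq, dotProduct_mulVec, vecMul_vecMul]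
  have hdotB : ∀ w : Fin n → ℂ,
      star (T.mulVec w) ⬝ᵥ B.mulVec (T.mulVec w) = star w ⬝ᵥ w := by
    intro w
    have hTBT : T * B * T = 1 := by
      rw [← hSS, ← Matrix.mul_assoc, hTS, Matrix.one_mul, hST]
    simp only [star_mulVec, hTherm.eq, dotProduct_mulVec, vecMul_vecMul,
      ← Matrix.mul_assoc, hTBT, vecMul_one]
  have hNbound : ∀ w : Fin n → ℂ,
      ‖star w ⬝ᵥ N.mulVec w‖ ≤ c * (star w ⬝ᵥ w).re := by
    intro w
    rw [hdot w]
    calc ‖star (T.mulVec w) ⬝ᵥ M.mulVec (T.mulVec w)‖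
        ≤ c * (star (T.mulVec w) ⬝ᵥ B.mulVec (T.mulVec w)).re := hbound _
      _ = c * (star w ⬝ᵥ w).re := by rw [hdotB w]
  -- roots of charpoly of N are bounded by c
  have hroots : ∀ μ ∈ N.charpoly.roots, ‖μ‖ ≤ c := by
    intro μ hμ
    have hroot : N.charpoly.IsRoot μ := isRoot_of_mem_roots hμ
    have hdet0 : (Matrix.scalar (Fin n) μ - N).det = 0 := by
      have := eval_det (charmatrix N) μ
      rw [matPolyEquiv_charmatrix] at this
      simp only [eval_sub, eval_X, eval_C] at this
      rw [← this, ← Matrix.charpoly]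
      exact hroot
    obtain ⟨w, hw0, hw⟩ := (Matrix.exists_mulVec_eq_zero_iff).mpr hdet0
    have hNw : N.mulVec w = μ • w := by
      have h1 := hw
      rw [sub_mulVec, sub_eq_zero] at h1
      rw [← h1]
      funext i
      simp [Matrix.scalar, mulVec_diagonal]
    have hpos : 0 < star w ⬝ᵥ w := dotProduct_star_self_pos_iff.mpr hw0
    have htre : 0 < (star w ⬝ᵥ w).re := by
      rw [Complex.lt_def] at hpos; simpa using hpos.1
    have htim : (star w ⬝ᵥ w).im = 0 := by
      rw [Complex.lt_def] at hpos; simpa using hpos.2.symm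
    have hval : star w ⬝ᵥ N.mulVec w = μ * (star w ⬝ᵥ w) := by
      rw [hNw, dotProduct_smul, smul_eq_mul]
    have hb := hNbound w
    rw [hval] at hb
    have ht : (star w ⬝ᵥ w) = ((star w ⬝ᵥ w).re : ℂ) := by
      apply Complex.ext <;> simp [htim]
    have hnorm : ‖star w ⬝ᵥ w‖ = (star w ⬝ᵥ w).re := by
      conv_lhs => rw [ht]
      rw [Complex.norm_real, Real.norm_of_nonneg htre.le]
    rw [norm_mul, hnorm] at hb
    exact le_of_mul_le_mul_right hb htre
  -- |det N| ≤ c ^ n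
  have hcard : Multiset.card N.charpoly.roots = n := by
    have hs : N.charpoly.Splits := IsAlgClosed.splits _
    have := (Polynomial.splits_iff_card_roots).mp hs
    rwa [Matrix.charpoly_natDegree_eq_dim, Fintype.card_fin] at this
  have hdetN : ‖N.det‖₊ ≤ (NNReal.mk c hc) ^ n := by
    rw [Matrix.det_eq_prod_roots_charpoly]
    have h0 : ‖N.charpoly.roots.prod‖₊
        = (N.charpoly.roots.map (fun z : ℂ => ‖z‖₊)).prod := by
      exact (Multiset.prod_hom N.charpoly.roots (nnnormHom.toMonoidHom (α := ℂ))).symm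
    rw [h0]
    calc (N.charpoly.roots.map (fun z : ℂ => ‖z‖₊)).prod
        ≤ (NNReal.mk c hc) ^
            Multiset.card (N.charpoly.roots.map (fun z : ℂ => ‖z‖₊)) := by
          apply Multiset.prod_le_pow_card
          intro x hx
          obtain ⟨μ, hμ, rfl⟩ := Multiset.mem_map.mp hx
          rw [← NNReal.coe_le_coe]
          simpa using hroots μ hμ
      _ = (NNReal.mk c hc) ^ n := by rw [Multiset.card_map, hcard]
  have hdetN' : ‖N.det‖ ≤ c ^ n := by
    have h2 : (‖N.det‖₊ : ℝ) ≤ ((NNReal.mk c hc) : ℝ) ^ n := by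
      exact_mod_cast hdetN
    simpa using h2
  -- combine
  have hM : S * N * S = M := by
    rw [hNdef]
    simp only [Matrix.mul_assoc]
    rw [hTS, Matrix.mul_one, ← Matrix.mul_assoc, hST, Matrix.one_mul]
  have hdetM : M.det = B.det * N.det := by
    rw [← hM, ← hSS]
    simp only [det_mul]
    ring
  have hnormB : ‖B.det‖ = B.det.re := by
    have hBeq : B.det = (B.det.re : ℂ) := by
      apply Complex.ext <;> simp [hdetBim]
    conv_lhs => rw [hBeq]
    rw [Complex.norm_real, Real.norm_of_nonneg hdetBre.le]
  calc ‖M.det‖ = ‖B.det‖ * ‖N.det‖ := by rw [hdetM, norm_mul]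
    _ = B.det.re * ‖N.det‖ := by rw [hnormB]
    _ ≤ B.det.re * c ^ n := mul_le_mul_of_nonneg_left hdetN' hdetBre.le
    _ = c ^ n * B.det.re := by ring
end

section
/- Let d > 0 be a real number, let k be an integer, let ε = 1 or ε = −1, and set z₀ := k·π + ε·i·arsinh(1/√d) ∈ ℂ. Then d·z₀·sin(z₀) − cos(z₀) ≠ 0, the quantity 1 + d·(sin z₀)² equals 0, and the function f(w) := sin(w)/(d·w·sin(w) − cos(w)) is complex differentiable at z₀ with f'(z₀) = 0. -/
open Complex

/-- The zeros of the derivative of Szőke's transition function: at the points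
`z₀ = kπ ± i·arsinh(1/√d)` (for `d > 0`), the denominator `d·z₀·sin z₀ − cos z₀`
is nonzero, `1 + d·sin²z₀ = 0`, and `f(w) = sin w / (d·w·sin w − cos w)` is
complex differentiable at `z₀` with derivative `0`. -/
theorem szoke_transition_deriv_zero (d : ℝ) (hd : 0 < d) (k : ℤ) (ε : ℝ)
    (hε : ε = 1 ∨ ε = -1) :
    let z₀ : ℂ := (k : ℂ) * (Real.pi : ℂ) +
      (ε : ℂ) * Complex.I * (Real.arsinh (1 / Real.sqrt d) : ℂ)
    (d : ℂ) * z₀ * Complex.sin z₀ - Complex.cos z₀ ≠ 0 ∧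
    1 + (d : ℂ) * Complex.sin z₀ ^ 2 = 0 ∧
    HasDerivAt (fun w : ℂ => Complex.sin w / ((d : ℂ) * w * Complex.sin w - Complex.cos w))
      0 z₀ := by
  intro z₀
  set a : ℝ := Real.arsinh (1 / Real.sqrt d) with ha
  set b : ℝ := ε * a with hb
  have hsqrt : 0 < Real.sqrt d := Real.sqrt_pos.mpr hd
  have hsinh : Real.sinh a = 1 / Real.sqrt d := Real.sinh_arsinh _
  have hapos : 0 < a := Real.arsinh_pos_iff.mpr (by positivity)
  set m : ℂ := (-1 : ℂ) ^ k with hmdef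
  have hm : m ^ 2 = 1 := by
    rw [hmdef, ← zpow_natCast ((-1 : ℂ) ^ k), ← zpow_mul]
    rw [show k * (2 : ℕ) = 2 * k by ring, zpow_mul]
    norm_num
  have hmne : m ≠ 0 := by
    intro h
    rw [h] at hm
    simp at hm
  have hz : z₀ = ((k * Real.pi : ℝ) : ℂ) + ((b : ℝ) : ℂ) * I := by
    simp only [z₀, hb]
    push_cast
    ring
  have hcoskpi : Complex.cos ((k * Real.pi : ℝ) : ℂ) = m := by
    rw [← Complex.ofReal_cos, hmdef]
    have : Real.cos (k * Real.pi) = (-1) ^ k := by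
      simpa using Real.cos_add_int_mul_pi 0 k
    rw [this]
    push_cast
    ring
  have hsinkpi : Complex.sin ((k * Real.pi : ℝ) : ℂ) = 0 := by
    rw [Complex.ofReal_mul, Complex.ofReal_intCast]
    exact Complex.sin_int_mul_pi k
  have hsin : Complex.sin z₀ = m * (Real.sinh b : ℂ) * I := by
    rw [hz, Complex.sin_add, Complex.sin_mul_I, Complex.cos_mul_I, hcoskpi, hsinkpi,
      ← Complex.ofReal_sinh]
    ring
  have hcos : Complex.cos z₀ = m * (Real.cosh b : ℂ) := by
    rw [hz, Complex.cos_add, Complex.sin_mul_I, Complex.cos_mul_I, hcoskpi, hsinkpi,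
      ← Complex.ofReal_cosh]
    ring
  have hsb2 : Real.sinh b ^ 2 = 1 / d := by
    have : Real.sinh b ^ 2 = Real.sinh a ^ 2 := by
      rcases hε with h | h <;> simp [hb, h, Real.sinh_neg] <;> ring
    rw [this, hsinh, div_pow, one_pow, Real.sq_sqrt hd.le]
  have hsb2c : ((Real.sinh b : ℝ) : ℂ) ^ 2 = 1 / (d : ℂ) := by
    rw [← Complex.ofReal_pow, hsb2]
    push_cast
    ring
  have hdc : (d : ℂ) ≠ 0 := by exact_mod_cast hd.ne'
  -- Second claim
  have h2 : 1 + (d : ℂ) * Complex.sin z₀ ^ 2 = 0 := by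
    rw [hsin]
    have : (1 : ℂ) + (d : ℂ) * (m * (Real.sinh b : ℂ) * I) ^ 2
        = 1 - (d : ℂ) * ((Real.sinh b : ℝ) : ℂ) ^ 2 := by
      linear_combination ((d : ℂ) * ((Real.sinh b : ℝ) : ℂ) ^ 2 * I ^ 2) * hm
        + ((d : ℂ) * ((Real.sinh b : ℝ) : ℂ) ^ 2) * Complex.I_sq
    rw [this, hsb2c]
    field_simp
    ring
  -- Denominator nonzero
  have hbsb : b * Real.sinh b = a * Real.sinh a := by
    rcases hε with h | h <;> simp [hb, h, Real.sinh_neg] <;> ring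
  have hexp : (d : ℂ) * z₀ * Complex.sin z₀ - Complex.cos z₀ =
      m * (((-(d * (b * Real.sinh b)) - Real.cosh b : ℝ) : ℂ)
        + ((d * k * Real.pi * Real.sinh b : ℝ) : ℂ) * I) := by
    rw [hsin, hcos, hz]
    push_cast
    simp only [← Complex.ofReal_sinh, ← Complex.ofReal_cosh]
    linear_combination (m * (d : ℂ) * (b : ℂ) * ((Real.sinh b : ℝ) : ℂ)) * Complex.I_sq
  have hane : (d : ℂ) * z₀ * Complex.sin z₀ - Complex.cos z₀ ≠ 0 := by
    rw [hexp]
    refine mul_ne_zero hmne ?_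
    intro h0
    have hre := congrArg Complex.re h0
    simp only [Complex.add_re, Complex.ofReal_re, Complex.mul_re, Complex.ofReal_im,
      Complex.I_re, Complex.I_im, Complex.zero_re] at hre
    have h1c : 1 ≤ Real.cosh b := Real.one_le_cosh b
    have hsa : 0 < Real.sinh a := by
      rw [hsinh]; positivity
    nlinarith [mul_nonneg (mul_nonneg hd.le hapos.le) hsa.le]
  refine ⟨hane, h2, ?_⟩
  -- Derivative
  have hg : HasDerivAt Complex.sin (Complex.cos z₀) z₀ := Complex.hasDerivAt_sin z₀
  have hh : HasDerivAt (fun w : ℂ => (d : ℂ) * w * Complex.sin w - Complex.cos w)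
      ((d : ℂ) * Complex.sin z₀ + (d : ℂ) * z₀ * Complex.cos z₀ - (-Complex.sin z₀)) z₀ := by
    exact ((((hasDerivAt_id z₀).const_mul (d : ℂ)).mul (Complex.hasDerivAt_sin z₀)).sub
      (Complex.hasDerivAt_cos z₀)).congr_deriv (by simp only [id]; ring)
  have hdiv := hg.div hh hane
  have hnum : Complex.cos z₀ * ((d : ℂ) * z₀ * Complex.sin z₀ - Complex.cos z₀)
      - Complex.sin z₀ * ((d : ℂ) * Complex.sin z₀ + (d : ℂ) * z₀ * Complex.cos z₀
        - (-Complex.sin z₀)) = 0 := by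
    linear_combination -(Complex.sin_sq_add_cos_sq z₀) - h2
  rw [hnum, zero_div] at hdiv
  exact hdiv
end
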